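/- Let S, I, R, B : [0,∞) → ℝ be a solution of the SIRB system S' = −βSI, I' = βSI − γI + βσαIR, R' = γI − βσIR, B' = βσ(1−α)IR with β>0, γ>0, σ>1, 0<α<1, initial conditions S(0)>0, I(0)>0, R(0)≥0, B(0)≥0 with (σβ/γ)·R(0) < 1, S(0)+I(0)+R(0)+B(0)=1, and suppose S(t)>0 and I(t)>0 for all t≥0. Define r(S) := (γ/(σβ))·(1 − (1 − (σβ/γ)·R(0))·(S/S(0))^σ) and R̂(S) := (β/γ)·(S + ασ·r(S)). Assume ℛ₀ := R̂(S(0)) ≤ 1, (β/γ)·(S(0) + ασ²R(0)) < ασ, and R̂(S̃) ≤ 1 where S̃ := ((β/γ)·S(0) / (σα·(1 − (σβ/γ)·R(0))))^(1/(σ−1)) · S(0). Then I is monotonically decreasing on [0,∞) and I(t) → 0 as t → ∞. -/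

import Mathlib

open Set Filter Real

lemma aux_const_Ici {f : ℝ → ℝ} (hf : ∀ t : ℝ, 0 ≤ t → HasDerivAt f 0 t) :
    ∀ t : ℝ, 0 ≤ t → f t = f 0 := by
  intro t ht
  exact constant_of_has_deriv_right_zero
    (fun x hx => (hf x hx.1).continuousAt.continuousWithinAt)
    (fun x hx => (hf x hx.1).hasDerivWithinAt) t ⟨ht, le_rfl⟩

lemma aux_anti_Ici {a : ℝ} {f f' : ℝ → ℝ} (hf : ∀ t, a ≤ t → HasDerivAt f (f' t) t)
    (h0 : ∀ t, a < t → f' t ≤ 0) : AntitoneOn f (Set.Ici a) := by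
  apply antitoneOn_of_hasDerivWithinAt_nonpos (f' := f') (convex_Ici a)
  · exact fun x hx => (hf x hx).continuousAt.continuousWithinAt
  · intro x hx; rw [interior_Ici] at hx; exact (hf x hx.le).hasDerivWithinAt
  · intro x hx; rw [interior_Ici] at hx; exact h0 x hx

lemma aux_bernoulli {a b σ : ℝ} (ha : 0 < a) (hb : 0 < b) (hσ : 1 < σ) (hne : b ≠ a) :
    a ^ σ + σ * a ^ (σ - 1) * (b - a) < b ^ σ := by
  have hs : -1 ≤ b / a - 1 := by
    have : 0 < b / a := div_pos hb ha
    linarith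
  have hs' : b / a - 1 ≠ 0 := by
    intro h
    apply hne
    have : b / a = 1 := by linarith
    field_simp at this
    linarith [this]
  have hB := one_add_mul_self_lt_rpow_one_add hs hs' hσ
  rw [show (1 : ℝ) + (b / a - 1) = b / a by ring] at hB
  have hP : (0:ℝ) < a ^ σ := Real.rpow_pos_of_pos ha σ
  have hmul := mul_lt_mul_of_pos_right hB hP
  have h1 : (b / a) ^ σ * a ^ σ = b ^ σ := by
    rw [← Real.mul_rpow (div_pos hb ha).le ha.le, div_mul_cancel₀ _ ha.ne']
  have h2 : a ^ (σ - 1) * a = a ^ σ := by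
    rw [Real.rpow_sub ha, Real.rpow_one]
    field_simp
  rw [h1] at hmul
  have h3 : (1 + σ * (b / a - 1)) * a ^ σ = a ^ σ + σ * a ^ (σ - 1) * (b - a) := by
    rw [← h2]; field_simp
  linarith [hmul, h3]

set_option maxHeartbeats 1600000 in
theorem sirb_no_epidemic_case2 (β γ σ α : ℝ) (S I R B : ℝ → ℝ)
    (hβ : 0 < β) (hγ : 0 < γ) (hσ : 1 < σ) (hα0 : 0 < α) (hα1 : α < 1)
    (hS' : ∀ t : ℝ, 0 ≤ t → HasDerivAt S (-(β * S t * I t)) t)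
    (hI' : ∀ t : ℝ, 0 ≤ t → HasDerivAt I (β * S t * I t - γ * I t + β * σ * α * I t * R t) t)
    (hR' : ∀ t : ℝ, 0 ≤ t → HasDerivAt R (γ * I t - β * σ * I t * R t) t)
    (hB' : ∀ t : ℝ, 0 ≤ t → HasDerivAt B (β * σ * (1 - α) * I t * R t) t)
    (hS0 : 0 < S 0) (hI0 : 0 < I 0) (hR0 : 0 ≤ R 0) (hB0 : 0 ≤ B 0)
    (hsum : S 0 + I 0 + R 0 + B 0 = 1)
    (hSpos : ∀ t : ℝ, 0 ≤ t → 0 < S t) (hIpos : ∀ t : ℝ, 0 ≤ t → 0 < I t)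
    (hR0lt1 : σ * β / γ * R 0 < 1)
    (r Rhat : ℝ → ℝ)
    (hr : ∀ x : ℝ, r x = γ / (σ * β) * (1 - (1 - σ * β / γ * R 0) * (x / S 0) ^ σ))
    (hRhat : ∀ x : ℝ, Rhat x = β / γ * (x + α * σ * r x))
    (hR0le : Rhat (S 0) ≤ 1)
    (hcase : β / γ * (S 0 + α * σ ^ 2 * R 0) < α * σ)
    (Stilde : ℝ)
    (hSt : Stilde = (β / γ * S 0 / (σ * α * (1 - σ * β / γ * R 0))) ^ (1 / (σ - 1)) * S 0)
    (hRt : Rhat Stilde ≤ 1) :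
    StrictAntiOn I (Set.Ici 0) ∧ Filter.Tendsto I Filter.atTop (nhds 0) := by
  have hσ0 : (0:ℝ) < σ := lt_trans one_pos hσ
  have hσβ : 0 < σ * β := mul_pos hσ0 hβ
  have hC : 0 < 1 - σ * β / γ * R 0 := by linarith
  -- conservation law : R t = r (S t)
  have hw0 : ∀ t : ℝ, 0 ≤ t →
      HasDerivAt (fun u => (σ * β * R u - γ) * S u ^ (-σ)) 0 t := by
    intro t ht
    have hSt' := hSpos t ht
    have hpow : HasDerivAt (fun u => S u ^ (-σ))
        (-σ * S t ^ (-σ - 1) * -(β * S t * I t)) t :=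
      (Real.hasDerivAt_rpow_const (Or.inl hSt'.ne')).comp t (hS' t ht)
    have h := (((hR' t ht).const_mul (σ * β)).sub_const γ).mul hpow
    refine h.congr_deriv (Eq.symm ?_)
    have key : S t ^ (-σ - 1) * S t = S t ^ (-σ) := by
      rw [← Real.rpow_add_one hSt'.ne' (-σ - 1)]; ring_nf
    linear_combination (-(σ * β * R t - γ) * σ * β * I t) * key
  have hwconst := aux_const_Ici hw0
  have hcons : ∀ t : ℝ, 0 ≤ t → R t = r (S t) := by
    intro t ht
    have hSt' := hSpos t ht
    have h := hwconst t ht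
    have h1 : S t ^ (-σ) = (S t ^ σ)⁻¹ := Real.rpow_neg hSt'.le σ
    have h2 : S 0 ^ (-σ) = (S 0 ^ σ)⁻¹ := Real.rpow_neg hS0.le σ
    have h3 : (S t / S 0) ^ σ = S t ^ σ / S 0 ^ σ := Real.div_rpow hSt'.le hS0.le σ
    have h4 : (0:ℝ) < S t ^ σ := Real.rpow_pos_of_pos hSt' σ
    have h5 : (0:ℝ) < S 0 ^ σ := Real.rpow_pos_of_pos hS0 σ
    rw [h1, h2, ← div_eq_mul_inv, ← div_eq_mul_inv, div_eq_div_iff h4.ne' h5.ne'] at h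
    rw [hr, h3]
    field_simp
    linear_combination h
  -- alternative expression for Rhat
  have hRhat' : ∀ x : ℝ, Rhat x = β / γ * x + α * (1 - (1 - σ * β / γ * R 0) * (x / S 0) ^ σ) := by
    intro x
    rw [hRhat, hr]
    have e : β / γ * (α * σ * (γ / (σ * β))) = α := by field_simp
    linear_combination (1 - (1 - σ * β / γ * R 0) * (x / S 0) ^ σ) * e
  -- Stilde facts
  have hbase : 0 < β / γ * S 0 / (σ * α * (1 - σ * β / γ * R 0)) :=
    div_pos (mul_pos (div_pos hβ hγ) hS0) (mul_pos (mul_pos hσ0 hα0) hC)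
  have hStpos : 0 < Stilde := by
    rw [hSt]; exact mul_pos (Real.rpow_pos_of_pos hbase _) hS0
  have hS0σ : (0:ℝ) < S 0 ^ σ := Real.rpow_pos_of_pos hS0 σ
  -- key identity : σ α C Stilde^(σ-1) = (β/γ) S0^σ / ... stated multiplied out
  have hT : σ * α * (1 - σ * β / γ * R 0) * Stilde ^ (σ - 1) * γ = β * S 0 ^ σ := by
    have e1 : Stilde ^ (σ - 1)
        = β / γ * S 0 / (σ * α * (1 - σ * β / γ * R 0)) * S 0 ^ (σ - 1) := by
      rw [hSt, Real.mul_rpow (Real.rpow_pos_of_pos hbase _).le hS0.le,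
        ← Real.rpow_mul hbase.le, one_div_mul_cancel (by linarith : σ - 1 ≠ 0), Real.rpow_one]
    have e2 : S 0 ^ (σ - 1) * S 0 = S 0 ^ σ := by
      rw [Real.rpow_sub hS0, Real.rpow_one, div_mul_cancel₀ _ hS0.ne']
    have hD : σ * α * (1 - σ * β / γ * R 0) ≠ 0 :=
      ne_of_gt (mul_pos (mul_pos hσ0 hα0) hC)
    have e3 : Stilde ^ (σ - 1) = β / γ * S 0 ^ σ / (σ * α * (1 - σ * β / γ * R 0)) := by
      rw [e1, ← e2]; field_simp
    rw [e3]
    have h9 := mul_div_cancel₀ (β / γ * S 0 ^ σ) hD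
    have h10 : γ * (β / γ * S 0 ^ σ) = β * S 0 ^ σ := by
      field_simp
    linear_combination γ * h9 + h10
  -- Rhat x < 1 for x > 0, x ≠ Stilde
  have hmax : ∀ x : ℝ, 0 < x → x ≠ Stilde → Rhat x < 1 := by
    intro x hx hne
    have hb := aux_bernoulli hStpos hx hσ hne
    have h3 : (x / S 0) ^ σ = x ^ σ / S 0 ^ σ := Real.div_rpow hx.le hS0.le σ
    have h4 : (Stilde / S 0) ^ σ = Stilde ^ σ / S 0 ^ σ := Real.div_rpow hStpos.le hS0.le σ
    rw [hRhat' Stilde, h4] at hRt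
    rw [hRhat' x, h3]
    -- multiply bernoulli by α*C/S0^σ
    have hcoef : 0 < α * (1 - σ * β / γ * R 0) / S 0 ^ σ :=
      div_pos (mul_pos hα0 hC) hS0σ
    have hb' := mul_lt_mul_of_pos_left hb hcoef
    have hcT : α * (1 - σ * β / γ * R 0) / S 0 ^ σ * (σ * Stilde ^ (σ - 1)) = β / γ := by
      rw [div_mul_eq_mul_div, div_eq_div_iff hS0σ.ne' hγ.ne']
      linear_combination hT
    have e4 : α * (1 - σ * β / γ * R 0) / S 0 ^ σ * (σ * Stilde ^ (σ - 1)) * (x - Stilde)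
        = β / γ * (x - Stilde) := by rw [hcT]
    have h1 : α * (1 - σ * β / γ * R 0) / S 0 ^ σ * Stilde ^ σ + β / γ * (x - Stilde) <
        α * (1 - σ * β / γ * R 0) / S 0 ^ σ * x ^ σ := by linarith [hb', e4]
    simp only [div_eq_mul_inv] at h1 hRt ⊢
    ring_nf at h1 hRt ⊢
    linarith [h1, hRt]
  -- derivative of I
  have hIder : ∀ t : ℝ, 0 ≤ t → HasDerivAt I (γ * I t * (Rhat (S t) - 1)) t := by
    intro t ht
    have hval : β * S t * I t - γ * I t + β * σ * α * I t * R t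
        = γ * I t * (Rhat (S t) - 1) := by
      rw [hRhat (S t), ← hcons t ht]
      field_simp
      ring
    exact hval ▸ hI' t ht
  have hIneg : ∀ t : ℝ, 0 ≤ t → S t ≠ Stilde → γ * I t * (Rhat (S t) - 1) < 0 := by
    intro t ht hne
    exact mul_neg_of_pos_of_neg (mul_pos hγ (hIpos t ht))
      (sub_neg.mpr (hmax (S t) (hSpos t ht) hne))
  have hInonpos : ∀ t : ℝ, 0 ≤ t → γ * I t * (Rhat (S t) - 1) ≤ 0 := by
    intro t ht
    by_cases hne : S t = Stilde
    · exact mul_nonpos_of_nonneg_of_nonpos (mul_pos hγ (hIpos t ht)).le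
        (by rw [hne]; linarith)
    · exact (hIneg t ht hne).le
  have hIanti : AntitoneOn I (Set.Ici 0) :=
    aux_anti_Ici hIder (fun t ht => hInonpos t ht.le)
  -- S strictly decreasing
  have hSanti : StrictAntiOn S (Set.Ici (0:ℝ)) := by
    apply strictAntiOn_of_hasDerivWithinAt_neg (f' := fun t => -(β * S t * I t)) (convex_Ici 0)
    · exact fun x hx => (hS' x hx).continuousAt.continuousWithinAt
    · intro x hx; rw [interior_Ici] at hx; exact ((hS' x hx.le)).hasDerivWithinAt
    · intro x hx; rw [interior_Ici] at hx
      exact neg_neg_iff_pos.mpr (mul_pos (mul_pos hβ (hSpos x hx.le)) (hIpos x hx.le))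
  -- strict antitonicity of I
  have hIstrict : StrictAntiOn I (Set.Ici (0:ℝ)) := by
    intro s hs t ht hst
    simp only [Set.mem_Ici] at hs ht
    rcases lt_or_eq_of_le (hIanti hs ht hst.le) with h | h
    · exact h
    exfalso
    have hconst : ∀ u ∈ Set.Icc s t, I u = I t := by
      intro u hu
      have h1 : I t ≤ I u := hIanti (le_trans hs hu.1) ht hu.2
      have h2 : I u ≤ I s := hIanti hs (le_trans hs hu.1) hu.1
      linarith
    set u := s + (t - s) / 3 with hu
    set v := s + 2 * (t - s) / 3 with hv
    have hsu : s < u := by rw [hu]; linarith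
    have huv : u < v := by rw [hu, hv]; linarith
    have hvt : v < t := by rw [hv]; linarith
    have hu0 : (0:ℝ) ≤ u := le_trans hs hsu.le
    have hv0 : (0:ℝ) ≤ v := le_trans hu0 huv.le
    have hSuv : S v < S u := hSanti hu0 hv0 huv
    obtain ⟨w, hsw, hwt, hwne⟩ : ∃ w, s < w ∧ w < t ∧ S w ≠ Stilde := by
      by_cases h1 : S u = Stilde
      · exact ⟨v, lt_trans hsu huv, hvt, by rw [← h1]; exact ne_of_lt hSuv⟩
      · exact ⟨u, hsu, lt_trans huv hvt, h1⟩
    have hw0 : (0:ℝ) ≤ w := le_trans hs hsw.le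
    have hzero : HasDerivAt I 0 w := by
      have hmem : Set.Ioo s t ∈ nhds w := Ioo_mem_nhds hsw hwt
      have heq : I =ᶠ[nhds w] fun _ => I t :=
        Filter.eventuallyEq_of_mem hmem fun y hy => hconst y (Set.Ioo_subset_Icc_self hy)
      exact (hasDerivAt_const w (I t)).congr_of_eventuallyEq heq
    exact absurd ((hIder w hw0).unique hzero) (ne_of_lt (hIneg w hw0 hwne))
  refine ⟨hIstrict, ?_⟩
  -- limit
  have hJanti : Antitone fun t : ℝ => I (max t 0) := fun a b hab =>
    hIanti (Set.mem_Ici.mpr (le_max_right a 0)) (Set.mem_Ici.mpr (le_max_right b 0))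
      (max_le_max hab le_rfl)
  have hbdd : BddBelow (Set.range fun t : ℝ => I (max t 0)) := by
    refine ⟨0, ?_⟩
    rintro y ⟨t, rfl⟩
    exact (hIpos _ (le_max_right _ _)).le
  have htends := tendsto_atTop_ciInf hJanti hbdd
  have hLle : ∀ t : ℝ, 0 ≤ t → (⨅ s : ℝ, I (max s 0)) ≤ I t := by
    intro t ht
    have := ciInf_le hbdd t
    rwa [max_eq_left ht] at this
  have hL0 : 0 ≤ ⨅ s : ℝ, I (max s 0) :=
    le_ciInf fun t => (hIpos _ (le_max_right _ _)).le
  have hLzero : (⨅ s : ℝ, I (max s 0)) = 0 := by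
    by_contra hne
    set L := ⨅ s : ℝ, I (max s 0) with hLdef
    have hL : 0 < L := lt_of_le_of_ne hL0 (Ne.symm hne)
    have hβL : 0 < β * L := mul_pos hβ hL
    -- step A : S eventually below Sstar
    set Sstar := γ * (1 - α) / (2 * β) with hSstar
    have hSstarpos : 0 < Sstar := div_pos (mul_pos hγ (by linarith)) (by linarith)
    have hg : ∀ t : ℝ, 0 ≤ t → HasDerivAt (fun x => Real.log (S x) + β * L * x)
        ((S t)⁻¹ * -(β * S t * I t) + β * L * 1) t := by
      intro t ht
      exact ((Real.hasDerivAt_log (hSpos t ht).ne').comp t (hS' t ht)).add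
        ((hasDerivAt_id t).const_mul (β * L))
    have hganti : AntitoneOn (fun x => Real.log (S x) + β * L * x) (Set.Ici 0) := by
      apply aux_anti_Ici hg
      intro t ht
      have hSt' := hSpos t ht.le
      have e1 : (S t)⁻¹ * -(β * S t * I t) = -(β * I t) := by
        field_simp
      rw [e1]
      have := hLle t ht.le
      nlinarith [hβ, hIpos t ht.le]
    set t0 := max 0 ((Real.log (S 0) - Real.log Sstar) / (β * L) + 1) with ht0def
    have ht0 : (0:ℝ) ≤ t0 := le_max_left _ _
    have hlog : Real.log (S t0) + β * L * t0 ≤ Real.log (S 0) + β * L * 0 :=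
      hganti (Set.mem_Ici.mpr le_rfl) (Set.mem_Ici.mpr ht0) ht0
    have ht0big : Real.log (S 0) - Real.log Sstar < β * L * t0 := by
      have h6 : (Real.log (S 0) - Real.log Sstar) / (β * L) + 1 ≤ t0 := le_max_right _ _
      have h7 : β * L * ((Real.log (S 0) - Real.log Sstar) / (β * L) + 1)
          = Real.log (S 0) - Real.log Sstar + β * L := by field_simp
      linarith [mul_le_mul_of_nonneg_left h6 hβL.le, h7, hβL]
    have hSt0 : S t0 < Sstar := by
      have h8 : Real.log (S t0) < Real.log Sstar := by linarith
      exact (Real.log_lt_log_iff (hSpos t0 ht0) hSstarpos).mp h8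
    -- step B : Rhat bound for t ≥ t0
    have hRb : ∀ t : ℝ, t0 ≤ t → Rhat (S t) - 1 ≤ -((1 - α) / 2) := by
      intro t htt
      have ht' : 0 ≤ t := le_trans ht0 htt
      have hSle : S t ≤ S t0 := by
        rcases eq_or_lt_of_le htt with rfl | hlt
        · exact le_rfl
        · exact (hSanti (Set.mem_Ici.mpr ht0) (Set.mem_Ici.mpr ht') hlt).le
      have hpos := hSpos t ht'
      rw [hRhat' (S t)]
      have hnn : 0 ≤ (1 - σ * β / γ * R 0) * (S t / S 0) ^ σ :=
        mul_nonneg hC.le (Real.rpow_nonneg (div_nonneg hpos.le hS0.le) σ)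
      have e5 : β / γ * Sstar = (1 - α) / 2 := by
        rw [hSstar]; field_simp
      have e6 : β / γ * S t ≤ β / γ * Sstar :=
        mul_le_mul_of_nonneg_left (by linarith) (div_pos hβ hγ).le
      linarith [mul_nonneg hα0.le hnn, e5, e6]
    -- step C : linear decay, contradiction
    set c := γ * ((1 - α) / 2) * L with hc
    have hcpos : 0 < c := mul_pos (mul_pos hγ (by linarith)) hL
    have hhder : ∀ t : ℝ, t0 ≤ t → HasDerivAt (fun x => I x + c * x)
        (γ * I t * (Rhat (S t) - 1) + c * 1) t := fun t htt =>
      (hIder t (le_trans ht0 htt)).add ((hasDerivAt_id t).const_mul c)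
    have hhanti : AntitoneOn (fun x => I x + c * x) (Set.Ici t0) := by
      apply aux_anti_Ici hhder
      intro t htt
      have ht' : 0 ≤ t := le_trans ht0 htt.le
      have h1 : γ * I t * (Rhat (S t) - 1) ≤ γ * I t * (-((1 - α) / 2)) :=
        mul_le_mul_of_nonneg_left (hRb t htt.le) (mul_pos hγ (hIpos t ht')).le
      have h2 : 0 ≤ γ * ((1 - α) / 2) * (I t - L) :=
        mul_nonneg (mul_pos hγ (by linarith)).le (by linarith [hLle t ht'])
      rw [hc]
      nlinarith [h1, h2]
    set T := t0 + I t0 / c + 1 with hT'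
    have hTge : t0 ≤ T := by
      have : 0 ≤ I t0 / c := div_nonneg (hIpos t0 ht0).le hcpos.le
      rw [hT']; linarith
    have hfin := hhanti (Set.mem_Ici.mpr le_rfl) (Set.mem_Ici.mpr hTge) hTge
    have hIT := hIpos T (le_trans ht0 hTge)
    have hdiv : c * (I t0 / c) = I t0 := by field_simp
    rw [hT'] at hfin
    nlinarith [hfin, hIT, hdiv, hcpos]
  -- conclude
  have : Filter.Tendsto (fun t : ℝ => I (max t 0)) Filter.atTop (nhds 0) := by
    rwa [hLzero] at htends
  apply this.congr'
  filter_upwards [Filter.eventually_ge_atTop (0:ℝ)] with t ht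
  rw [max_eq_left ht]
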